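/- Let B ≥ 0 and let (m_n) be a sequence of reals with |m_n − n| ≤ B for all n. If (z_n) and (z′_n) are sequences in (0, ρ) with z_n F′(z_n)/F(z_n) = n and z′_n F′(z′_n)/F(z′_n) = m_n for all n ≥ 1, then there is a constant K such that |z_n − z′_n| ≤ K / n² for all n ≥ 1. (The tuning precision needed to control the expected size up to O(1) is ε = O(n^{−2}) for rational specifications.) -/

import Mathlib

set_option maxHeartbeats 1000000

theorem keylem (ρ α : ℝ) (hρ : 0 < ρ)
    (β : ℝ → ℝ) (U : Set ℝ) (hU : IsOpen U) (hUρ : Set.Icc 0 ρ ⊆ U)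
    (hβ : ContDiffOn ℝ 1 β U) (hβpos : ∀ z ∈ U, 0 < β z)
    (F : ℝ → ℝ) (hF : ∀ z, F z = β z * (1 - z / ρ) ^ (-α))
    (zv : ℝ) (hz : zv ∈ Set.Ioo 0 ρ) :
    (α + zv * deriv F zv / F zv - zv * deriv β zv / β zv) * (ρ - zv) = α * ρ := by
  have hzU : zv ∈ U := hUρ ⟨hz.1.le, hz.2.le⟩
  have hβz : 0 < β zv := hβpos zv hzU
  have hw : 0 < 1 - zv / ρ := by
    rw [sub_pos, div_lt_one hρ]; exact hz.2
  have hβd : HasDerivAt β (deriv β zv) zv :=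
    ((hβ.differentiableOn one_ne_zero).differentiableAt (hU.mem_nhds hzU)).hasDerivAt
  have hwd : HasDerivAt (fun z => 1 - z / ρ) (-(1/ρ)) zv := by
    simpa using ((hasDerivAt_id zv).div_const ρ).const_sub 1
  have hpow : HasDerivAt (fun z => (1 - z / ρ) ^ (-α))
      (-(1/ρ) * (-α) * (1 - zv / ρ) ^ (-α - 1)) zv := by
    simpa [mul_comm, mul_assoc, mul_left_comm] using hwd.rpow_const (p := -α) (Or.inl hw.ne')
  have hFd : HasDerivAt F
      (deriv β zv * (1 - zv / ρ) ^ (-α)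
        + β zv * (-(1/ρ) * (-α) * (1 - zv / ρ) ^ (-α - 1))) zv := by
    have h := hβd.mul hpow
    have hFe : F = fun z => β z * (1 - z / ρ) ^ (-α) := funext hF
    rw [hFe]
    exact h
  have hdF : deriv F zv = deriv β zv * (1 - zv / ρ) ^ (-α)
        + β zv * (-(1/ρ) * (-α) * (1 - zv / ρ) ^ (-α - 1)) := hFd.deriv
  have hps : (1 - zv / ρ) ^ (-α - 1) = (1 - zv / ρ) ^ (-α) / (1 - zv / ρ) :=
    Real.rpow_sub_one hw.ne' _
  rw [hdF, hF zv, hps]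
  set P := (1 - zv / ρ) ^ (-α) with hPdef
  have hP : 0 < P := Real.rpow_pos_of_pos hw _
  have hwρ : 1 - zv / ρ = (ρ - zv) / ρ := by field_simp
  rw [hwρ]
  have h1 : ρ - zv ≠ 0 := sub_ne_zero.2 (ne_of_gt hz.2)
  field_simp
  ring

/-- For a rational specification with singular form `F(z) = β(z)(1 − z/ρ)^{−α}`,
the tuning precision needed to keep the expected size within `O(1)` of the
target `n` is `ε = O(n^{−2})`. -/
theorem rational_tuning_precision
    (ρ α : ℝ) (hρ : 0 < ρ) (hα : 0 < α)
    (β : ℝ → ℝ) (U : Set ℝ) (hU : IsOpen U) (hUρ : Set.Icc 0 ρ ⊆ U)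
    (hβ : ContDiffOn ℝ 1 β U) (hβpos : ∀ z ∈ U, 0 < β z)
    (F : ℝ → ℝ) (hF : ∀ z, F z = β z * (1 - z / ρ) ^ (-α))
    (B : ℝ) (hB : 0 ≤ B) (m : ℕ → ℝ) (hm : ∀ n : ℕ, |m n - n| ≤ B)
    (z z' : ℕ → ℝ)
    (hzmem : ∀ n : ℕ, 1 ≤ n → z n ∈ Set.Ioo 0 ρ)
    (hz'mem : ∀ n : ℕ, 1 ≤ n → z' n ∈ Set.Ioo 0 ρ)
    (htune : ∀ n : ℕ, 1 ≤ n → z n * deriv F (z n) / F (z n) = n)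
    (htune' : ∀ n : ℕ, 1 ≤ n → z' n * deriv F (z' n) / F (z' n) = m n) :
    ∃ K : ℝ, ∀ n : ℕ, 1 ≤ n → |z n - z' n| ≤ K / (n : ℝ) ^ 2 := by
  set g : ℝ → ℝ := fun x => x * deriv β x / β x with hgdef
  -- bound on g over Icc 0 ρ
  have hβ' : ContinuousOn (deriv β) U := hβ.continuousOn_deriv_of_isOpen hU le_rfl
  have hgc : ContinuousOn g (Set.Icc 0 ρ) := by
    apply ContinuousOn.div
    · exact continuousOn_id.mul (hβ'.mono hUρ)
    · exact (hβ.continuousOn).mono hUρ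
    · exact fun x hx => (hβpos x (hUρ hx)).ne'
  obtain ⟨M0, hM0⟩ := isCompact_Icc.exists_bound_of_continuousOn hgc
  set M : ℝ := max M0 0 with hMdef
  have hM : 0 ≤ M := le_max_right _ _
  have hgM : ∀ x ∈ Set.Icc 0 ρ, |g x| ≤ M := fun x hx =>
    le_trans (by simpa using hM0 x hx) (le_max_left _ _)
  set C₁ : ℝ := 2 * ρ * (M + α) with hC1
  set C₂ : ℝ := 2 * ρ * (M + B + α) with hC2
  refine ⟨(B + 2 * M) * C₁ * C₂ / (α * ρ), fun n hn => ?_⟩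
  have hn1 : (1:ℝ) ≤ (n:ℝ) := by exact_mod_cast hn
  have hnpos : (0:ℝ) < n := lt_of_lt_of_le one_pos hn1
  obtain ⟨ha0, haρ⟩ := hzmem n hn
  obtain ⟨hb0, hbρ⟩ := hz'mem n hn
  set a := z n
  set b := z' n
  have hamem : a ∈ Set.Icc 0 ρ := ⟨ha0.le, haρ.le⟩
  have hbmem : b ∈ Set.Icc 0 ρ := ⟨hb0.le, hbρ.le⟩
  have hga := hgM a hamem
  have hgb := hgM b hbmem
  have hra : 0 < ρ - a := sub_pos.2 haρ
  have hrb : 0 < ρ - b := sub_pos.2 hbρ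
  -- key identities
  have hA : (α + (n:ℝ) - g a) * (ρ - a) = α * ρ := by
    have := keylem ρ α hρ β U hU hUρ hβ hβpos F hF a ⟨ha0, haρ⟩
    rwa [htune n hn] at this
  have hA' : (α + m n - g b) * (ρ - b) = α * ρ := by
    have := keylem ρ α hρ β U hU hUρ hβ hβpos F hF b ⟨hb0, hbρ⟩
    rwa [htune' n hn] at this
  set A := α + (n:ℝ) - g a with hAdef
  set A' := α + m n - g b with hA'def
  have hApos : 0 < A := by
    have h : A = α * ρ / (ρ - a) := by rw [eq_div_iff hra.ne']; exact hA
    rw [h]; positivity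
  have hA'pos : 0 < A' := by
    have h : A' = α * ρ / (ρ - b) := by rw [eq_div_iff hrb.ne']; exact hA'
    rw [h]; positivity
  have hmn := hm n
  have habs1 : -M ≤ g a ∧ g a ≤ M := abs_le.1 hga
  have habs2 : -M ≤ g b ∧ g b ≤ M := abs_le.1 hgb
  have habs3 : -B ≤ m n - n ∧ m n - n ≤ B := abs_le.1 hmn
  -- bound n * (ρ - a) ≤ C₁
  have hbd1 : (n:ℝ) * (ρ - a) ≤ C₁ := by
    rcases le_or_gt (n:ℝ) (2 * M) with h | h
    · have : (n:ℝ) * (ρ - a) ≤ 2 * M * ρ := by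
        apply mul_le_mul h (by linarith) hra.le (by linarith)
      rw [hC1]; nlinarith [this, mul_pos hρ hα]
    · have hAge : (n:ℝ)/2 ≤ A := by rw [hAdef]; linarith [habs1.2]
      have : (n:ℝ)/2 * (ρ - a) ≤ A * (ρ - a) := mul_le_mul_of_nonneg_right hAge hra.le
      rw [hA] at this
      rw [hC1]; nlinarith [this, mul_nonneg hM hρ.le]
  have hbd2 : (n:ℝ) * (ρ - b) ≤ C₂ := by
    rcases le_or_gt (n:ℝ) (2 * (M + B)) with h | h
    · have : (n:ℝ) * (ρ - b) ≤ 2 * (M + B) * ρ := by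
        apply mul_le_mul h (by linarith) hrb.le (by linarith)
      rw [hC2]; nlinarith [this, mul_pos hρ hα]
    · have hAge : (n:ℝ)/2 ≤ A' := by rw [hA'def]; linarith [habs2.2, habs3.1]
      have : (n:ℝ)/2 * (ρ - b) ≤ A' * (ρ - b) := mul_le_mul_of_nonneg_right hAge hrb.le
      rw [hA'] at this
      rw [hC2]; nlinarith [this, mul_nonneg hM hρ.le, mul_nonneg hB hρ.le]
  -- difference identity
  have hdiff : (a - b) * (α * ρ) = (A - A') * ((ρ - a) * (ρ - b)) := by
    linear_combination (ρ - a) * hA' - (ρ - b) * hA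
  have hAA : |A - A'| ≤ B + 2 * M := by
    rw [hAdef, hA'def, abs_le]
    constructor <;> [linarith [habs1.2, habs2.1, habs3.2]; linarith [habs1.1, habs2.2, habs3.1]]
  -- final
  have hαρ : 0 < α * ρ := mul_pos hα hρ
  have hC1nn : 0 ≤ C₁ := by rw [hC1]; positivity
  have hC2nn : 0 ≤ C₂ := by rw [hC2]; positivity
  have h1 : |a - b| * (α * ρ) = |A - A'| * ((ρ - a) * (ρ - b)) := by
    rw [← abs_of_pos hαρ, ← abs_mul, hdiff, abs_mul, abs_of_pos (mul_pos hra hrb)]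
  have h2 : (n:ℝ)^2 * (|a - b| * (α * ρ)) ≤ (B + 2*M) * (C₁ * C₂) := by
    calc (n:ℝ)^2 * (|a - b| * (α * ρ))
        = |A - A'| * (((n:ℝ) * (ρ - a)) * ((n:ℝ) * (ρ - b))) := by rw [h1]; ring
      _ ≤ (B + 2*M) * (C₁ * C₂) := by
          apply mul_le_mul hAA _ _ (by linarith)
          · exact mul_le_mul hbd1 hbd2 (mul_nonneg hnpos.le hrb.le) hC1nn
          · positivity
  rw [le_div_iff₀ (by positivity : (0:ℝ) < (n:ℝ)^2), le_div_iff₀ hαρ]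
  calc |a - b| * (n:ℝ)^2 * (α * ρ) = (n:ℝ)^2 * (|a - b| * (α * ρ)) := by ring
    _ ≤ (B + 2*M) * (C₁ * C₂) := h2
    _ = (B + 2*M) * C₁ * C₂ := by ring
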